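/- arXiv:1901.07516 — 3 statements merged into one kernel-verified Lean document; each statement's English description precedes it below -/
import Mathlib

section
/- Let H be a real Hilbert space and let (V_1,…,V_N) be an innately regular collection of closed linear subspaces of H. Let η ∈ (0,1]. Then for every initial point x_0 ∈ H, every control sequence (i_n)_{n≥0} with i_n ∈ {1,…,N}, and every sequence of relaxation coefficients (λ_n)_{n≥0} with λ_n ∈ [η, 2−η], the trajectory defined by x_{n+1} := P_{i_n,λ_n}(x_n) satisfies ∑_{n=0}^∞ ‖x_{n+1} − x_n‖ < ∞; in particular, the sequence (x_n) converges in norm to a limit in H. -/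
open Metric Filter

open Finset RealInnerProductSpace

noncomputable def relaxProj {H : Type*} [NormedAddCommGroup H] [InnerProductSpace ℝ H]
    (V : Submodule ℝ H) [V.HasOrthogonalProjection] (l : ℝ) (x : H) : H :=
  (1 - l) • x + l • (V.orthogonalProjectionOnto x : H)

section Helpers

variable {H : Type*} [NormedAddCommGroup H] [InnerProductSpace ℝ H]

lemma my_le_of_sq_le {a b : ℝ} (ha : 0 ≤ a) (hb : 0 ≤ b) (h : a^2 ≤ b^2) : a ≤ b := by
  nlinarith

lemma infDist_orthProj (K : Submodule ℝ H) [K.HasOrthogonalProjection] (v : H) :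
    Metric.infDist v (K : Set H) = ‖v - (Submodule.orthogonalProjectionOnto K v : H)‖ := by
  haveI : Nonempty (K : Set H) := ⟨⟨0, K.zero_mem⟩⟩
  refine le_antisymm ?_ ?_
  · have := Metric.infDist_le_dist_of_mem (x := v)
      (SetLike.coe_mem (Submodule.orthogonalProjectionOnto K v))
    rwa [dist_eq_norm] at this
  · rw [Metric.infDist_eq_iInf]
    refine le_ciInf fun w => ?_
    rw [dist_eq_norm]
    set P : H := (Submodule.orthogonalProjectionOnto K v : H) with hP
    have hw : (w : H) ∈ K := w.2
    have h1 : v - P ∈ Kᗮ := Submodule.sub_starProjection_mem_orthogonal (K := K) v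
    have h2 : P - (w : H) ∈ K := sub_mem (SetLike.coe_mem _) hw
    have ho : (inner ℝ (v - P) (P - (w:H)) : ℝ) = 0 := (Submodule.mem_orthogonal' K _).1 h1 _ h2
    have expand : v - (w : H) = (v - P) + (P - (w : H)) := by abel
    have key : ‖v - (w : H)‖^2 = ‖v - P‖^2 + ‖P - (w : H)‖^2 := by
      rw [expand, norm_add_sq_real, ho]; ring
    nlinarith [norm_nonneg (v - P), norm_nonneg (v - (w:H)), norm_nonneg (P - (w:H))]

lemma relaxProj_sub_self (K : Submodule ℝ H) [K.HasOrthogonalProjection] (l : ℝ) (v : H) :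
    relaxProj K l v - v = l • ((Submodule.orthogonalProjectionOnto K v : H) - v) := by
  simp only [relaxProj, sub_smul, one_smul, smul_sub]
  abel

lemma norm_relaxProj_sub_self (K : Submodule ℝ H) [K.HasOrthogonalProjection]
    {l : ℝ} (hl : 0 ≤ l) (v : H) :
    ‖relaxProj K l v - v‖ = l * Metric.infDist v (K : Set H) := by
  rw [relaxProj_sub_self, norm_smul, Real.norm_eq_abs, abs_of_nonneg hl,
    infDist_orthProj, norm_sub_rev]

lemma relaxProj_of_mem (K : Submodule ℝ H) [K.HasOrthogonalProjection] (l : ℝ) {v : H}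
    (hv : v ∈ K) : relaxProj K l v = v := by
  simp only [relaxProj, ← Submodule.starProjection_apply, Submodule.starProjection_eq_self_iff.2 hv]
  rw [← add_smul]; simp

lemma relaxProj_fejer (K : Submodule ℝ H) [K.HasOrthogonalProjection] (l : ℝ) (v : H)
    {z : H} (hz : z ∈ K) :
    ‖relaxProj K l v - z‖^2
      = ‖v - z‖^2 - l * (2 - l) * (Metric.infDist v (K : Set H))^2 := by
  set P : H := (Submodule.orthogonalProjectionOnto K v : H) with hP
  have hd : Metric.infDist v (K : Set H) = ‖v - P‖ := infDist_orthProj K v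
  have h1 : v - P ∈ Kᗮ := Submodule.sub_starProjection_mem_orthogonal (K := K) v
  have h2 : P - z ∈ K := sub_mem (SetLike.coe_mem _) hz
  have ho : (inner ℝ (v - P) (P - z) : ℝ) = 0 := (Submodule.mem_orthogonal' K _).1 h1 _ h2
  have hinner : (inner ℝ (v - z) (v - P) : ℝ) = ‖v - P‖^2 := by
    have expand : v - z = (v - P) + (P - z) := by abel
    rw [expand, inner_add_left, real_inner_comm (v - P) (P - z), ho,
      real_inner_self_eq_norm_sq]
    ring
  have expand2 : relaxProj K l v - z = (v - z) - l • (v - P) := by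
    simp only [relaxProj, ← hP, sub_smul, one_smul, smul_sub]
    abel
  rw [expand2, norm_sub_sq_real, real_inner_smul_right, hinner, norm_smul,
    Real.norm_eq_abs, mul_pow, sq_abs, hd]
  ring

end Helpers


set_option maxHeartbeats 4000000 in
lemma key_comb {ι : Type*} [DecidableEq ι]
    (i : ℕ → ι) (s d : ℕ → ℝ) (e : ι → ℕ → ℝ) (DI : Finset ι → ℕ → ℝ)
    (η κ : ℝ) (hη0 : 0 < η) (hη1 : η ≤ 1) (hκ1 : 1 ≤ κ)
    (hd_eq : ∀ n, d n = e (i n) n)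
    (hs0 : ∀ n, 0 ≤ s n)
    (hs_le : ∀ n, s n ≤ 2 * d n)
    (hDI0 : ∀ I n, 0 ≤ DI I n)
    (he0 : ∀ j n, 0 ≤ e j n)
    (hfejer : ∀ n (I : Finset ι), i n ∈ I → (DI I (n+1))^2 ≤ (DI I n)^2 - η * (d n)^2)
    (hd_le : ∀ n (I : Finset ι), i n ∈ I → d n ≤ DI I n)
    (hlip2 : ∀ (j : ι) (a n : ℕ), a ≤ n → e j a ≤ e j n + ∑ t ∈ Finset.Ico a n, s t)
    (hlip1 : ∀ (j : ι) (a n : ℕ), a ≤ n → e j n ≤ e j a + ∑ t ∈ Finset.Ico a n, s t)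
    (hreg : ∀ (I : Finset ι) (hI : I.Nonempty) (n : ℕ),
      DI I n ≤ κ * I.sup' hI (fun j => e j n)) :
    ∀ k : ℕ, ∃ C : ℝ, 0 ≤ C ∧ ∀ (I : Finset ι) (a b : ℕ), I.card ≤ k →
      (∀ n, a ≤ n → n < b → i n ∈ I) → ∑ n ∈ Finset.Ico a b, s n ≤ C * DI I a := by
  classical
  have hκ0 : (0:ℝ) < κ := lt_of_lt_of_le one_pos hκ1
  have hd0 : ∀ n, 0 ≤ d n := fun n => (hd_eq n) ▸ he0 _ n
  have hmono : ∀ n (I : Finset ι), i n ∈ I → DI I (n+1) ≤ DI I n := by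
    intro n I hin
    refine my_le_of_sq_le (hDI0 _ _) (hDI0 _ _) ?_
    linarith only [hfejer n I hin, mul_nonneg hη0.le (sq_nonneg (d n))]
  have hmono_chain : ∀ (I : Finset ι) (a n : ℕ), a ≤ n →
      (∀ t, a ≤ t → t < n → i t ∈ I) → DI I n ≤ DI I a := by
    intro I a n han hctrl
    induction n, han using Nat.le_induction with
    | base => exact le_rfl
    | succ n hn IH =>
        exact (hmono n I (hctrl n hn (by omega))).trans
          (IH (fun t h1 h2 => hctrl t h1 (by omega)))
  intro k
  induction k with
  | zero =>
      refine ⟨0, le_rfl, fun I a b hcard hctrl => ?_⟩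
      have hI : I = ∅ := Finset.card_eq_zero.mp (le_antisymm hcard (Nat.zero_le _))
      by_cases hab : a < b
      · exact absurd (hctrl a le_rfl hab) (by simp [hI])
      · rw [Finset.Ico_eq_empty hab, Finset.sum_empty, zero_mul]
  | succ k IH =>
      obtain ⟨C, hC0, hC⟩ := IH
      set A : ℝ := 1 + C * κ with hA_def
      clear_value A
      have hCκ0 : 0 ≤ C * κ := mul_nonneg hC0 hκ0.le
      have hA1 : 1 ≤ A := by rw [hA_def]; linarith
      have h3A1 : (1:ℝ) ≤ 3 * A := by linarith
      have hpow1 : ∀ m : ℕ, (1:ℝ) ≤ (3*A)^m := fun m => one_le_pow₀ h3A1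
      set β : ℝ := (3*A)^k - 1 with hβ_def
      clear_value β
      have hβ0 : 0 ≤ β := by have := hpow1 k; rw [hβ_def]; linarith
      set θ : ℝ := 1 / (κ * (3*A)^k) with hθ_def
      clear_value θ
      have hκpow : (0:ℝ) < κ * (3*A)^k :=
        mul_pos hκ0 (lt_of_lt_of_le one_pos (hpow1 k))
      have hθ0 : 0 < θ := by rw [hθ_def]; exact one_div_pos.mpr hκpow
      have hθ1 : θ ≤ 1 := by
        rw [hθ_def, div_le_one hκpow]
        nlinarith [hpow1 k]
      have hβθ : (β + 1) * θ = 1 / κ := by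
        have h1 : β + 1 = (3*A)^k := by rw [hβ_def]; ring
        rw [h1, hθ_def]
        rw [eq_div_iff (ne_of_gt hκ0)]
        field_simp
      set q : ℝ := Real.sqrt (1 - η * θ^2) with hq_def
      clear_value q
      have hθsq : θ^2 ≤ 1 := by nlinarith
      have harg0 : 0 ≤ 1 - η * θ^2 := by nlinarith
      have hq0 : 0 ≤ q := by rw [hq_def]; exact Real.sqrt_nonneg _
      have hq2 : q^2 = 1 - η * θ^2 := by rw [hq_def]; exact Real.sq_sqrt harg0
      have hq1 : q < 1 := by
        by_contra hcon
        push_neg at hcon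
        nlinarith [mul_pos hη0 (mul_pos hθ0 hθ0)]
      set C' : ℝ := (β * θ + 2) / (1 - q) with hC'_def
      clear_value C'
      have h1q : (0:ℝ) < 1 - q := by linarith
      have hC'0 : 0 ≤ C' := by
        rw [hC'_def]
        apply div_nonneg (by nlinarith [mul_nonneg hβ0 hθ0.le]) h1q.le
      have hiden : β * θ + 2 + C' * q = C' := by
        have h1 : C' * (1 - q) = β * θ + 2 := by
          rw [hC'_def, div_mul_cancel₀ _ (ne_of_gt h1q)]
        nlinarith [h1]
      have hC'ge : β * θ + 2 ≤ C' := by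
        nlinarith [hiden, mul_nonneg hC'0 hq0]
      refine ⟨C', hC'0, ?_⟩
      have main : ∀ (L a b : ℕ), b ≤ a + L → ∀ I : Finset ι, I.card ≤ k + 1 →
          (∀ n, a ≤ n → n < b → i n ∈ I) →
          ∑ n ∈ Finset.Ico a b, s n ≤ C' * DI I a := by
        intro L
        induction L with
        | zero =>
            intro a b hb I hcard hctrl
            rw [Finset.Ico_eq_empty (by omega), Finset.sum_empty]
            exact mul_nonneg hC'0 (hDI0 _ _)
        | succ L IHL =>
            intro a b hb I hcard hctrl
            by_cases hab : a < b
            swap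
            · rw [Finset.Ico_eq_empty hab, Finset.sum_empty]
              exact mul_nonneg hC'0 (hDI0 _ _)
            set D : ℝ := DI I a with hD_def
            clear_value D
            have hD0 : 0 ≤ D := by rw [hD_def]; exact hDI0 _ _
            rcases eq_or_lt_of_le hD0 with hDz | hDpos
            · -- D = 0 : all steps are zero
              have hallzero : ∀ n, a ≤ n → n < b → s n = 0 := by
                intro n han hnb
                have h1 : DI I n ≤ DI I a :=
                  hmono_chain I a n han (fun t h1 h2 => hctrl t h1 (by omega))
                rw [← hD_def] at h1
                have h2 : d n ≤ DI I n := hd_le n I (hctrl n han hnb)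
                have h3 : s n ≤ 2 * d n := hs_le n
                have h4 := hs0 n
                have h5 := hd0 n
                linarith
              calc ∑ n ∈ Finset.Ico a b, s n
                  = 0 := Finset.sum_eq_zero (fun n hn => by
                      rw [Finset.mem_Ico] at hn; exact hallzero n hn.1 hn.2)
                _ ≤ C' * D := mul_nonneg hC'0 hD0
            -- D > 0
            · have hIne : I.Nonempty := ⟨i a, hctrl a le_rfl hab⟩
              obtain ⟨istar, histar_mem, histar_eq⟩ :=
                Finset.exists_mem_eq_sup' hIne (fun j => e j a)
              have histar : D / κ ≤ e istar a := by
                rw [div_le_iff₀ hκ0]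
                have h1 := hreg I hIne a
                rw [histar_eq, ← hD_def] at h1
                linarith only [h1, mul_comm κ (e istar a)]
              -- the round lemma
              have hround : ∀ w, a ≤ w → w ≤ b →
                  (∀ n, a ≤ n → n < w → d n < θ * D) →
                  ∑ n ∈ Finset.Ico a w, s n ≤ β * (θ * D) := by
                intro w haw hwb hsmall
                set U : ℕ → Finset ι := fun n => (Finset.Ico a n).image i with hU_def
                have hUmono : ∀ {m n : ℕ}, m ≤ n → U m ⊆ U n := by
                  intro m n hmn
                  exact Finset.image_subset_image (Finset.Ico_subset_Ico le_rfl hmn)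
                have hUmem : ∀ {t n : ℕ}, a ≤ t → t < n → i t ∈ U n := by
                  intro t n h1 h2
                  exact Finset.mem_image_of_mem i (Finset.mem_Ico.2 ⟨h1, h2⟩)
                have hUsubI : ∀ {n : ℕ}, n ≤ w → U n ⊆ I := by
                  intro n hnw j hj
                  obtain ⟨t, ht, rfl⟩ := Finset.mem_image.1 hj
                  rw [Finset.mem_Ico] at ht
                  exact hctrl t ht.1 (by omega)
                have hcard_sub : ∀ {n : ℕ}, n ≤ w → istar ∉ U n → (U n).card ≤ k := by
                  intro n hnw hni
                  have hsub : U n ⊆ I.erase istar :=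
                    Finset.subset_erase.2 ⟨hUsubI hnw, hni⟩
                  calc (U n).card ≤ (I.erase istar).card := Finset.card_le_card hsub
                    _ = I.card - 1 := Finset.card_erase_of_mem histar_mem
                    _ ≤ k := by omega
                have hθD0 : 0 ≤ θ * D := mul_nonneg hθ0.le hD0
                have Φ : ∀ n, a ≤ n → n ≤ w →
                    istar ∉ U n ∧
                    ∑ t ∈ Finset.Ico a n, s t ≤ ((3*A)^((U n).card) - 1) * (θ * D) := by
                  intro n
                  induction n using Nat.strong_induction_on with
                  | _ n IHn =>
                    intro han hnw
                    rcases eq_or_lt_of_le han with heq | hlt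
                    · constructor
                      · intro hcon
                        rw [← heq] at hcon
                        simp [hU_def] at hcon
                      · rw [← heq]
                        simp [hU_def]
                    · obtain ⟨m, rfl⟩ : ∃ m, n = m + 1 := ⟨n - 1, by omega⟩
                      have ham : a ≤ m := by omega
                      have hmw : m < w := by omega
                      obtain ⟨hstar_m, hsum_m⟩ := IHn m (by omega) ham (by omega)
                      have hUmcard : (U m).card ≤ k := hcard_sub (by omega) hstar_m
                      have hsum_m' : ∑ t ∈ Finset.Ico a m, s t ≤ β * (θ * D) := by
                        refine hsum_m.trans ?_
                        have h1 : ((3*A):ℝ)^((U m).card) ≤ (3*A)^k :=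
                          pow_le_pow_right₀ h3A1 hUmcard
                        have h2 : ((3*A)^((U m).card) - 1) * (θ * D)
                            ≤ ((3*A)^k - 1) * (θ * D) :=
                          mul_le_mul_of_nonneg_right (by linarith) hθD0
                        rw [hβ_def]
                        linarith
                      have hfreeze : θ * D ≤ e istar m := by
                        have h1 := hlip2 istar a m ham
                        have h2 : (β + 1) * (θ * D) = D / κ := by
                          calc (β + 1) * (θ * D) = ((β + 1) * θ) * D := by ring
                            _ = (1/κ) * D := by rw [hβθ]
                            _ = D / κ := by ring
                        linarith only [histar, h1, hsum_m', h2]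
                      have him : i m ≠ istar := by
                        intro hcon
                        have h1 : d m < θ * D := hsmall m ham hmw
                        rw [hd_eq m, hcon] at h1
                        linarith
                      have hstar_succ : istar ∉ U (m+1) := by
                        intro hcon
                        obtain ⟨t, ht, hti⟩ := Finset.mem_image.1 hcon
                        rw [Finset.mem_Ico] at ht
                        rcases Nat.lt_succ_iff_lt_or_eq.1 ht.2 with h | h
                        · exact hstar_m (hti ▸ hUmem ht.1 h)
                        · subst h; exact him hti
                      refine ⟨hstar_succ, ?_⟩
                      -- minimal time mt with U mt = U (m+1)
                      have hex : ∃ t, U t = U (m+1) := ⟨m+1, rfl⟩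
                      have hUne : (U (m+1)).Nonempty := ⟨i m, hUmem ham (by omega)⟩
                      set mt := Nat.find hex with hmt_def
                      have hmt_spec : U mt = U (m+1) := Nat.find_spec hex
                      have hmt_le : mt ≤ m + 1 := Nat.find_min' hex rfl
                      have hmt_pos : a < mt := by
                        by_contra hcon
                        push_neg at hcon
                        have hempty : U mt = ∅ := by
                          simp only [hU_def]
                          rw [Finset.Ico_eq_empty (by omega : ¬ a < mt)]
                          exact Finset.image_empty i
                        rw [hmt_spec] at hempty
                        exact Finset.Nonempty.ne_empty hUne hempty
                      obtain ⟨m', hm'⟩ : ∃ m', mt = m' + 1 := ⟨mt - 1, by omega⟩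
                      have ham' : a ≤ m' := by omega
                      have hm'm : m' ≤ m := by omega
                      have hUm'_ne : U m' ≠ U (m+1) := Nat.find_min hex (by omega)
                      have hUm'_sub : U m' ⊆ U (m+1) := hUmono (by omega)
                      have hUm'_card : (U m').card < (U (m+1)).card :=
                        Finset.card_lt_card
                          (Finset.ssubset_iff_subset_ne.2 ⟨hUm'_sub, hUm'_ne⟩)
                      set r : ℕ := (U (m+1)).card with hr_def
                      clear_value r
                      have hr1 : 1 ≤ r := by
                        rw [hr_def]
                        exact Finset.card_pos.2 hUne
                      obtain ⟨hstar_m'2, hsum_m'2⟩ := IHn m' (by omega) ham' (by omega)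
                      have hPm : ∑ t ∈ Finset.Ico a mt, s t
                          ≤ ((3*A)^(r-1) + 1) * (θ * D) := by
                        rw [hm', Finset.sum_Ico_succ_top ham']
                        have h1 : ((3*A):ℝ)^((U m').card) ≤ (3*A)^(r-1) :=
                          pow_le_pow_right₀ h3A1 (by omega)
                        have h2 : s m' ≤ 2 * (θ * D) := by
                          have h3 := hs_le m'
                          have h4 := hsmall m' ham' (by omega)
                          linarith
                        have h5 : ((3*A)^((U m').card) - 1) * (θ * D)
                            ≤ ((3*A)^(r-1) - 1) * (θ * D) :=
                          mul_le_mul_of_nonneg_right (by linarith) hθD0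
                        linarith
                      have hseg : ∑ t ∈ Finset.Ico mt (m+1), s t
                          ≤ C * DI (U (m+1)) mt := by
                        refine hC (U (m+1)) mt (m+1) (hcard_sub (by omega) hstar_succ) ?_
                        intro t h1 h2
                        have h3 : i t ∈ U (t+1) := hUmem (by omega) (by omega)
                        exact hUmono (by omega : t + 1 ≤ m + 1) h3
                      have hDIseg : DI (U (m+1)) mt
                          ≤ κ * (θ * D + ∑ t ∈ Finset.Ico a mt, s t) := by
                        refine (hreg (U (m+1)) hUne mt).trans ?_
                        refine mul_le_mul_of_nonneg_left ?_ hκ0.le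
                        refine Finset.sup'_le _ _ (fun j hj => ?_)
                        rw [← hmt_spec] at hj
                        obtain ⟨t, ht, rfl⟩ := Finset.mem_image.1 hj
                        rw [Finset.mem_Ico] at ht
                        have h1 := hlip1 (i t) t mt (le_of_lt ht.2)
                        have h2 : e (i t) t < θ * D := by
                          rw [← hd_eq t]
                          exact hsmall t ht.1 (by omega)
                        have h3 : ∑ u ∈ Finset.Ico t mt, s u
                            ≤ ∑ u ∈ Finset.Ico a mt, s u :=
                          Finset.sum_le_sum_of_subset_of_nonneg
                            (Finset.Ico_subset_Ico ht.1 le_rfl) (fun u _ _ => hs0 u)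
                        linarith
                      have hsplit : ∑ t ∈ Finset.Ico a (m+1), s t
                          = (∑ t ∈ Finset.Ico a mt, s t)
                            + ∑ t ∈ Finset.Ico mt (m+1), s t :=
                        (Finset.sum_Ico_consecutive _ (by omega) hmt_le).symm
                      rw [hsplit]
                      set Pm : ℝ := ∑ t ∈ Finset.Ico a mt, s t with hPm_def
                      clear_value Pm
                      have hPm0 : 0 ≤ Pm := by
                        rw [hPm_def]; exact Finset.sum_nonneg (fun t _ => hs0 t)
                      set X : ℝ := (3*A)^(r-1) with hX_def
                      clear_value X
                      have hX1 : (1:ℝ) ≤ X := by rw [hX_def]; exact hpow1 _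
                      have hpowr : ((3*A):ℝ)^r = 3*A*X := by
                        rw [hX_def]
                        conv_lhs => rw [show r = (r-1) + 1 by omega]
                        rw [pow_succ]
                        ring
                      have hchain : ∑ t ∈ Finset.Ico mt (m+1), s t
                          ≤ C * (κ * (θ * D + Pm)) :=
                        hseg.trans (mul_le_mul_of_nonneg_left hDIseg hC0)
                      have e1 : C * κ * Pm ≤ C * κ * ((X + 1) * (θ * D)) :=
                        mul_le_mul_of_nonneg_left hPm hCκ0
                      have e2 : ∑ t ∈ Finset.Ico mt (m+1), s t
                          ≤ C * κ * (θ * D) + C * κ * Pm := by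
                        have e2' : C * (κ * (θ * D + Pm))
                            = C * κ * (θ * D) + C * κ * Pm := by ring
                        linarith only [hchain, e2']
                      have e3 : 0 ≤ (X - 1) * (θ * D) :=
                        mul_nonneg (by linarith only [hX1]) hθD0
                      have e4 : 0 ≤ C * κ * ((X - 1) * (θ * D)) := mul_nonneg hCκ0 e3
                      have hAXT : A * (X * (θ * D))
                          = X * (θ * D) + C * κ * (X * (θ * D)) := by
                        rw [hA_def]; ring
                      rw [hpowr]
                      linarith only [hPm, e1, e2, e3, e4, hAXT]
                obtain ⟨hstar_w, hsum_w⟩ := Φ w haw le_rfl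
                refine hsum_w.trans ?_
                have hcard_w : (U w).card ≤ k := hcard_sub le_rfl hstar_w
                have h1 : ((3*A):ℝ)^((U w).card) ≤ (3*A)^k :=
                  pow_le_pow_right₀ h3A1 hcard_w
                have h2 : ((3*A)^((U w).card) - 1) * (θ * D)
                    ≤ ((3*A)^k - 1) * (θ * D) :=
                  mul_le_mul_of_nonneg_right (by linarith) hθD0
                rw [hβ_def]
                linarith
              -- main case split: is there a big step?
              by_cases hbig : ∃ n, a ≤ n ∧ n < b ∧ θ * D ≤ d n
              · haveI : DecidablePred (fun n => a ≤ n ∧ n < b ∧ θ * D ≤ d n) :=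
                  fun n => Classical.dec _
                set u := Nat.find hbig with hu_def
                obtain ⟨hau, hub, hdu⟩ := Nat.find_spec hbig
                have hsmall : ∀ n, a ≤ n → n < u → d n < θ * D := by
                  intro n h1 h2
                  have h3 := Nat.find_min hbig h2
                  push_neg at h3
                  exact h3 h1 (by omega)
                have hsum_round : ∑ n ∈ Finset.Ico a u, s n ≤ β * (θ * D) :=
                  hround u hau (le_of_lt hub) hsmall
                have hDu : DI I u ≤ D := by
                  have h1 := hmono_chain I a u hau (fun t h1 h2 => hctrl t h1 (by omega))
                  rw [← hD_def] at h1
                  exact h1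
                have hsu : s u ≤ 2 * D := by
                  have h1 := hs_le u
                  have h2 := hd_le u I (hctrl u hau hub)
                  linarith
                have hdrop : DI I (u+1) ≤ q * D := by
                  refine my_le_of_sq_le (hDI0 _ _) (mul_nonneg hq0 hD0) ?_
                  have h1 := hfejer u I (hctrl u hau hub)
                  have h2 : (DI I u)^2 ≤ D^2 := pow_le_pow_left₀ (hDI0 _ _) hDu 2
                  have h3 : (θ * D)^2 ≤ (d u)^2 :=
                    pow_le_pow_left₀ (mul_nonneg hθ0.le hD0) hdu 2
                  have h4 : (q*D)^2 = (1 - η * θ^2) * D^2 := by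
                    rw [mul_pow, hq2]
                  have h5 : η * (θ * D)^2 ≤ η * (d u)^2 :=
                    mul_le_mul_of_nonneg_left h3 hη0.le
                  have h6 : η * (θ * D)^2 = η * θ^2 * D^2 := by ring
                  linarith only [h1, h2, h4, h5, h6]
                have htail : ∑ n ∈ Finset.Ico (u+1) b, s n ≤ C' * (q * D) := by
                  have h1 : ∑ n ∈ Finset.Ico (u+1) b, s n ≤ C' * DI I (u+1) :=
                    IHL (u+1) b (by omega) I hcard
                      (fun n h1 h2 => hctrl n (by omega) h2)
                  exact h1.trans (mul_le_mul_of_nonneg_left hdrop hC'0)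
                have hsplit : ∑ n ∈ Finset.Ico a b, s n
                    = (∑ n ∈ Finset.Ico a u, s n) + ∑ n ∈ Finset.Ico u b, s n :=
                  (Finset.sum_Ico_consecutive _ hau (by omega)).symm
                have hsplit2 : ∑ n ∈ Finset.Ico u b, s n
                    = s u + ∑ n ∈ Finset.Ico (u+1) b, s n :=
                  Finset.sum_eq_sum_Ico_succ_bot hub _
                have hfinal : β * (θ * D) + 2 * D + C' * (q * D) = C' * D := by
                  linear_combination D * hiden
                rw [hsplit, hsplit2]
                linarith
              · push_neg at hbig
                have h1 : ∑ n ∈ Finset.Ico a b, s n ≤ β * (θ * D) :=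
                  hround b (le_of_lt hab) le_rfl hbig
                have h2 : β * (θ * D) ≤ C' * D := by
                  nlinarith [hC'ge, mul_nonneg hβ0 hθ0.le, hD0]
                linarith
      intro I a b hcard hctrl
      exact main (b - a) a b (by omega) I hcard hctrl


section Assembly

variable {H : Type*} [NormedAddCommGroup H] [InnerProductSpace ℝ H]

lemma hasOrthProj_biInf [CompleteSpace H] {N : ℕ} (V : Fin N → Submodule ℝ H)
    [∀ i, CompleteSpace (V i)] (I : Finset (Fin N)) :
    Submodule.HasOrthogonalProjection (⨅ j ∈ I, V j : Submodule ℝ H) := by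
  haveI : CompleteSpace (↥(⨅ j ∈ I, V j : Submodule ℝ H)) := by
    have hclosed : IsClosed ((⨅ j ∈ I, V j : Submodule ℝ H) : Set H) := by
      have h1 : ((⨅ j ∈ I, V j : Submodule ℝ H) : Set H)
          = ⋂ j, ⋂ (_ : j ∈ I), (V j : Set H) := by
        simp [Submodule.coe_iInf]
      rw [h1]
      exact isClosed_iInter fun j => isClosed_iInter fun _ =>
        (completeSpace_coe_iff_isComplete.mp inferInstance).isClosed
    exact hclosed.completeSpace_coe
  infer_instance

end Assembly

/-- Under innate regularity, all trajectories of unrestricted relaxed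
projections have absolutely summable displacements; in particular they converge in norm. -/
theorem stmt_1 {H : Type*} [NormedAddCommGroup H] [InnerProductSpace ℝ H] [CompleteSpace H]
    (N : ℕ) (hN : 1 ≤ N) (V : Fin N → Submodule ℝ H) [∀ i, CompleteSpace (V i)]
    (hreg : ∀ (I : Finset (Fin N)) (hI : I.Nonempty), ∃ κ : ℝ,
      ∀ x : H, infDist x ((⨅ i ∈ I, V i : Submodule ℝ H) : Set H) ≤
        κ * I.sup' hI (fun i => infDist x (V i : Set H)))
    (η : ℝ) (hη : η ∈ Set.Ioc (0 : ℝ) 1) :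
    ∀ (i : ℕ → Fin N) (lam : ℕ → ℝ),
      (∀ n, lam n ∈ Set.Icc η (2 - η)) →
      ∀ x : ℕ → H, (∀ n, x (n + 1) = relaxProj (V (i n)) (lam n) (x n)) →
        Summable (fun n => ‖x (n + 1) - x n‖) ∧
        ∃ L : H, Tendsto x atTop (nhds L) := by
  obtain ⟨hη0, hη1⟩ := hη
  intro i lam hlam x hx
  classical
  -- the regularity constants
  choose K hK using hreg
  set κ : ℝ := 1 + ∑ I : Finset (Fin N), |dite I.Nonempty (fun h => K I h) (fun _ => 0)|
    with hκ_def
  have hsum0 : 0 ≤ ∑ I : Finset (Fin N), |dite I.Nonempty (fun h => K I h) (fun _ => 0)| :=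
    Finset.sum_nonneg fun I _ => abs_nonneg _
  have hκ1 : 1 ≤ κ := by rw [hκ_def]; linarith
  have hκK : ∀ (I : Finset (Fin N)) (hI : I.Nonempty), K I hI ≤ κ := by
    intro I hI
    have h1 : dite I.Nonempty (fun h => K I h) (fun _ => 0) = K I hI := dif_pos hI
    have h2 : |dite I.Nonempty (fun h => K I h) (fun _ => 0)|
        ≤ ∑ J : Finset (Fin N), |dite J.Nonempty (fun h => K J h) (fun _ => 0)| :=
      Finset.single_le_sum (f := fun J : Finset (Fin N) =>
        |dite J.Nonempty (fun h => K J h) (fun _ => 0)|)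
        (fun J _ => abs_nonneg _) (Finset.mem_univ I)
    have h3 := le_abs_self (dite I.Nonempty (fun h => K I h) (fun _ => 0))
    rw [hκ_def]
    linarith [h1 ▸ h3]
  -- regularity in the final form
  have hreg' : ∀ (I : Finset (Fin N)) (hI : I.Nonempty) (n : ℕ),
      infDist (x n) ((⨅ j ∈ I, V j : Submodule ℝ H) : Set H)
        ≤ κ * I.sup' hI (fun j => infDist (x n) (V j : Set H)) := by
    intro I hI n
    have h1 := hK I hI (x n)
    have hsup0 : 0 ≤ I.sup' hI (fun j => infDist (x n) (V j : Set H)) := by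
      obtain ⟨j, hj⟩ := hI
      exact le_trans infDist_nonneg
        (Finset.le_sup' (f := fun j => infDist (x n) (V j : Set H)) hj)
    exact h1.trans (mul_le_mul_of_nonneg_right (hκK I hI) hsup0)
  -- step norm identity
  have hs_eq : ∀ n, ‖x (n + 1) - x n‖ = lam n * infDist (x n) (V (i n) : Set H) := by
    intro n
    rw [hx n]
    exact norm_relaxProj_sub_self _ (le_trans hη0.le (hlam n).1) _
  have hs_le : ∀ n, ‖x (n + 1) - x n‖ ≤ 2 * infDist (x n) (V (i n) : Set H) := by
    intro n
    rw [hs_eq n]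
    have h1 := (hlam n).2
    have h2 : (0:ℝ) ≤ infDist (x n) (V (i n) : Set H) := infDist_nonneg
    nlinarith
  -- Fejér inequality
  have hfejer : ∀ (n : ℕ) (I : Finset (Fin N)), i n ∈ I →
      (infDist (x (n+1)) ((⨅ j ∈ I, V j : Submodule ℝ H) : Set H))^2
        ≤ (infDist (x n) ((⨅ j ∈ I, V j : Submodule ℝ H) : Set H))^2
          - η * (infDist (x n) (V (i n) : Set H))^2 := by
    intro n I hin
    haveI := hasOrthProj_biInf V I
    set W : Submodule ℝ H := (⨅ j ∈ I, V j : Submodule ℝ H) with hW_def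
    set z : H := (Submodule.orthogonalProjectionOnto W (x n) : H) with hz_def
    have hzW : z ∈ W := SetLike.coe_mem _
    have hzV : z ∈ V (i n) := by
      have hle : W ≤ V (i n) := by
        rw [hW_def]
        exact iInf₂_le (i n) hin
      exact hle hzW
    have h1 : infDist (x n) (W : Set H) = ‖x n - z‖ := infDist_orthProj W (x n)
    have h2 : infDist (x (n+1)) (W : Set H) ≤ ‖x (n+1) - z‖ := by
      rw [← dist_eq_norm]
      exact infDist_le_dist_of_mem hzW
    have h3 : ‖x (n+1) - z‖^2
        = ‖x n - z‖^2 - lam n * (2 - lam n) * (infDist (x n) (V (i n) : Set H))^2 := by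
      rw [hx n]
      exact relaxProj_fejer _ _ _ hzV
    have h4 : η ≤ lam n * (2 - lam n) := by
      obtain ⟨hl1, hl2⟩ := hlam n
      nlinarith
    have h5 : (infDist (x (n+1)) (W : Set H))^2 ≤ ‖x (n+1) - z‖^2 :=
      pow_le_pow_left₀ infDist_nonneg h2 2
    have h6 : (0:ℝ) ≤ (infDist (x n) (V (i n) : Set H))^2 := sq_nonneg _
    have h1sq : (infDist (x n) (W : Set H))^2 = ‖x n - z‖^2 := by rw [h1]
    have h7 : η * (infDist (x n) (V (i n) : Set H))^2
        ≤ lam n * (2 - lam n) * (infDist (x n) (V (i n) : Set H))^2 :=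
      mul_le_mul_of_nonneg_right h4 h6
    linarith only [h5, h3, h1sq, h7]
  -- distance to the small space dominates the step distance
  have hd_le : ∀ (n : ℕ) (I : Finset (Fin N)), i n ∈ I →
      infDist (x n) (V (i n) : Set H)
        ≤ infDist (x n) ((⨅ j ∈ I, V j : Submodule ℝ H) : Set H) := by
    intro n I hin
    refine infDist_le_infDist_of_subset ?_ ?_
    · exact SetLike.coe_subset_coe.2 (iInf₂_le (i n) hin)
    · exact ⟨0, (⨅ j ∈ I, V j : Submodule ℝ H).zero_mem⟩
  -- Lipschitz along the trajectory
  have hlip1 : ∀ (j : Fin N) (a n : ℕ), a ≤ n →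
      infDist (x n) (V j : Set H)
        ≤ infDist (x a) (V j : Set H) + ∑ t ∈ Finset.Ico a n, ‖x (t+1) - x t‖ := by
    intro j a n han
    induction n, han using Nat.le_induction with
    | base => simp
    | succ n hn IH =>
        have h1 : infDist (x (n+1)) (V j : Set H)
            ≤ infDist (x n) (V j : Set H) + dist (x (n+1)) (x n) :=
          infDist_le_infDist_add_dist
        rw [Finset.sum_Ico_succ_top hn]
        rw [dist_eq_norm] at h1
        linarith
  have hlip2 : ∀ (j : Fin N) (a n : ℕ), a ≤ n →
      infDist (x a) (V j : Set H)
        ≤ infDist (x n) (V j : Set H) + ∑ t ∈ Finset.Ico a n, ‖x (t+1) - x t‖ := by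
    intro j a n han
    induction n, han using Nat.le_induction with
    | base => simp
    | succ n hn IH =>
        have h1 : infDist (x n) (V j : Set H)
            ≤ infDist (x (n+1)) (V j : Set H) + dist (x n) (x (n+1)) :=
          infDist_le_infDist_add_dist
        rw [Finset.sum_Ico_succ_top hn]
        rw [dist_eq_norm, norm_sub_rev] at h1
        linarith
  -- apply the combinatorial lemma
  obtain ⟨C, hC0, hC⟩ := key_comb i (fun n => ‖x (n + 1) - x n‖)
    (fun n => infDist (x n) (V (i n) : Set H))
    (fun j n => infDist (x n) (V j : Set H))
    (fun I n => infDist (x n) ((⨅ j ∈ I, V j : Submodule ℝ H) : Set H))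
    η κ hη0 hη1 hκ1
    (fun n => rfl)
    (fun n => norm_nonneg _)
    hs_le
    (fun I n => infDist_nonneg)
    (fun j n => infDist_nonneg)
    hfejer
    hd_le
    hlip2
    hlip1
    hreg'
    N
  have hbound : ∀ b : ℕ,
      ∑ n ∈ Finset.range b, ‖x (n + 1) - x n‖
        ≤ C * infDist (x 0) ((⨅ j ∈ (Finset.univ : Finset (Fin N)), V j :
            Submodule ℝ H) : Set H) := by
    intro b
    have h1 := hC Finset.univ 0 b (by simp) (fun n _ _ => Finset.mem_univ _)
    rw [Finset.range_eq_Ico]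
    exact h1
  have hsummable : Summable (fun n => ‖x (n + 1) - x n‖) :=
    summable_of_sum_range_le (fun n => norm_nonneg _) hbound
  refine ⟨hsummable, ?_⟩
  have hcauchy : CauchySeq x :=
    cauchySeq_of_summable_dist
      (hsummable.congr (fun n => by rw [dist_eq_norm, norm_sub_rev]))
  obtain ⟨L, hL⟩ := cauchySeq_tendsto_of_complete hcauchy
  exact ⟨L, hL⟩
end

section
/- Let V and W be closed subspaces of a real Hilbert space H, and let c := sup{ |⟨v,w⟩| : v ∈ V ∩ (V∩W)^⊥, w ∈ W ∩ (V∩W)^⊥, ‖v‖ ≤ 1, ‖w‖ ≤ 1 } (so that c = cos φ(V,W) where φ(V,W) is the Friedrichs angle between V and W; the supremum over the empty set is taken to be 0). Then for all x ∈ H, d(x, V∩W)·√(1−c²) ≤ d(x,V) + d(x,W). -/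
set_option maxHeartbeats 800000

open Metric
open scoped RealInnerProductSpace

private lemma key_scalar {n p q a b c t : ℝ} (hn : 0 ≤ n) (hp : 0 ≤ p) (hq : 0 ≤ q)
    (ha : 0 ≤ a) (hb : 0 ≤ b) (hc0 : 0 ≤ c) (hc1 : c ≤ 1)
    (e1 : p ^ 2 + a ^ 2 = n ^ 2) (e2 : q ^ 2 + b ^ 2 = n ^ 2)
    (ht : |t| ≤ c * p * q)
    (hdet : (n ^ 4 * t - n ^ 2 * p ^ 2 * q ^ 2) ^ 2 ≤
      (n ^ 4 * p ^ 2 - n ^ 2 * p ^ 4) * (n ^ 4 * q ^ 2 - n ^ 2 * q ^ 4)) :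
    n ^ 2 * (1 - c ^ 2) ≤ (a + b) ^ 2 := by
  rcases eq_or_lt_of_le hn with hn0 | hn'
  · rw [← hn0]
    have : (0:ℝ) ^ 2 * (1 - c ^ 2) = 0 := by ring
    rw [this]
    positivity
  rcases eq_or_lt_of_le hp with hp0 | hp'
  · -- p = 0, so a ^ 2 = n ^ 2
    have ha2 : a ^ 2 = n ^ 2 := by rw [← e1, ← hp0]; ring
    nlinarith [mul_nonneg ha hb, mul_nonneg (sq_nonneg n) (sq_nonneg c), sq_nonneg b]
  rcases eq_or_lt_of_le hq with hq0 | hq'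
  · have hb2 : b ^ 2 = n ^ 2 := by rw [← e2, ← hq0]; ring
    nlinarith [mul_nonneg ha hb, mul_nonneg (sq_nonneg n) (sq_nonneg c), sq_nonneg a]
  have ha2 : a ^ 2 = n ^ 2 - p ^ 2 := by linarith
  have hb2 : b ^ 2 = n ^ 2 - q ^ 2 := by linarith
  have h5 : (n ^ 4 * p ^ 2 - n ^ 2 * p ^ 4) * (n ^ 4 * q ^ 2 - n ^ 2 * q ^ 4) =
      (n ^ 2 * p * q * a * b) ^ 2 := by
    rw [show (n ^ 2 * p * q * a * b) ^ 2 = n ^ 4 * p ^ 2 * q ^ 2 * a ^ 2 * b ^ 2 by ring,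
      ha2, hb2]; ring
  rw [h5] at hdet
  have hYnn : 0 ≤ n ^ 2 * p * q * a * b := by positivity
  have hX' : -(n ^ 4 * t - n ^ 2 * p ^ 2 * q ^ 2) ≤ n ^ 2 * p * q * a * b :=
    le_of_sq_le_sq (by rw [neg_sq]; exact hdet) hYnn
  have hX : -(n ^ 2 * p * q * a * b) ≤ n ^ 4 * t - n ^ 2 * p ^ 2 * q ^ 2 := by linarith
  have ht' : t ≤ c * p * q := (le_abs_self t).trans ht
  have ht'' : n ^ 4 * t ≤ n ^ 4 * (c * p * q) :=
    mul_le_mul_of_nonneg_left ht' (by positivity)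
  have hpos : (0:ℝ) < n ^ 2 * p * q := by positivity
  have h9 : n ^ 2 * p * q * (p * q) ≤ n ^ 2 * p * q * (a * b + c * n ^ 2) := by
    linarith [hX, ht'']
  have hk : p * q ≤ a * b + c * n ^ 2 := le_of_mul_le_mul_left h9 hpos
  have hsq : p ^ 2 * q ^ 2 ≤ (a * b + c * n ^ 2) ^ 2 := by
    have h := mul_self_le_mul_self (mul_nonneg hp hq) hk
    linarith [h]
  have hab2 : a ^ 2 * b ^ 2 = (n ^ 2 - p ^ 2) * (n ^ 2 - q ^ 2) := by rw [ha2, hb2]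
  have hid : n ^ 2 * ((a + b) ^ 2) - n ^ 2 * (n ^ 2 * (1 - c ^ 2)) =
      ((a * b + c * n ^ 2) ^ 2 - p ^ 2 * q ^ 2) + 2 * (n ^ 2 * (a * b)) * (1 - c) := by
    linear_combination (-1 : ℝ) * hab2 + n ^ 2 * e1 + n ^ 2 * e2
  have hnn : 0 ≤ 2 * (n ^ 2 * (a * b)) * (1 - c) :=
    mul_nonneg (by positivity) (by linarith)
  have hfin : n ^ 2 * (n ^ 2 * (1 - c ^ 2)) ≤ n ^ 2 * ((a + b) ^ 2) := by
    linarith [hid, hsq, hnn]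
  have hn2 : (0:ℝ) < n ^ 2 := by positivity
  exact le_of_mul_le_mul_left hfin hn2

private lemma infDist_eq_proj {H : Type*} [NormedAddCommGroup H] [InnerProductSpace ℝ H]
    (K : Submodule ℝ H) [CompleteSpace K] (x : H) :
    infDist x (K : Set H) = ‖x - K.orthogonalProjectionOnto x‖ := by
  rw [Metric.infDist_eq_iInf, ← Submodule.starProjection_apply, Submodule.starProjection_minimal]
  simp_rw [dist_eq_norm]
  rfl

/-- quantitative regularity for two subspaces via the Friedrichs angle:
`d(x, V ∩ W)·sin φ(V,W) ≤ d(x,V) + d(x,W)`. -/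
theorem stmt_6 {H : Type*} [NormedAddCommGroup H] [InnerProductSpace ℝ H] [CompleteSpace H]
    (V W : Submodule ℝ H) [CompleteSpace V] [CompleteSpace W]
    (c : ℝ)
    (hc : c = sSup {r : ℝ | ∃ v w : H, v ∈ V ⊓ (V ⊓ W)ᗮ ∧ w ∈ W ⊓ (V ⊓ W)ᗮ ∧
      ‖v‖ ≤ 1 ∧ ‖w‖ ≤ 1 ∧ r = |⟪v, w⟫|}) :
    ∀ x : H, infDist x ((V ⊓ W : Submodule ℝ H) : Set H) * Real.sqrt (1 - c ^ 2) ≤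
      infDist x (V : Set H) + infDist x (W : Set H) := by
  haveI : CompleteSpace (V ⊓ W : Submodule ℝ H) := by
    have hVc : IsClosed (V : Set H) :=
      (completeSpace_coe_iff_isComplete.mp ‹_›).isClosed
    have hWc : IsClosed (W : Set H) :=
      (completeSpace_coe_iff_isComplete.mp ‹_›).isClosed
    have : IsClosed ((V ⊓ W : Submodule ℝ H) : Set H) := by
      rw [Submodule.coe_inf]; exact hVc.inter hWc
    exact this.completeSpace_coe
  have hmem0 : (0:ℝ) ∈ {r : ℝ | ∃ v w : H, v ∈ V ⊓ (V ⊓ W)ᗮ ∧ w ∈ W ⊓ (V ⊓ W)ᗮ ∧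
      ‖v‖ ≤ 1 ∧ ‖w‖ ≤ 1 ∧ r = |⟪v, w⟫|} := by
    refine ⟨0, 0, ?_, ?_, by simp, by simp, by simp⟩ <;> exact zero_mem _
  have hSbdd : BddAbove {r : ℝ | ∃ v w : H, v ∈ V ⊓ (V ⊓ W)ᗮ ∧ w ∈ W ⊓ (V ⊓ W)ᗮ ∧
      ‖v‖ ≤ 1 ∧ ‖w‖ ≤ 1 ∧ r = |⟪v, w⟫|} := by
    refine ⟨1, fun r hr => ?_⟩
    obtain ⟨v, w, hv, hw, hv1, hw1, rfl⟩ := hr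
    calc |⟪v, w⟫| ≤ ‖v‖ * ‖w‖ := abs_real_inner_le_norm v w
      _ ≤ 1 := mul_le_one₀ hv1 (norm_nonneg w) hw1
  have hc0 : 0 ≤ c := by rw [hc]; exact le_csSup hSbdd hmem0
  have hc1 : c ≤ 1 := by
    rw [hc]
    refine csSup_le ⟨0, hmem0⟩ (fun r hr => ?_)
    obtain ⟨v, w, hv, hw, hv1, hw1, rfl⟩ := hr
    calc |⟪v, w⟫| ≤ ‖v‖ * ‖w‖ := abs_real_inner_le_norm v w
      _ ≤ 1 := mul_le_one₀ hv1 (norm_nonneg w) hw1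
  intro x
  set x' : H := x - (V ⊓ W : Submodule ℝ H).orthogonalProjectionOnto x with hx'def
  have hx'U : x' ∈ (V ⊓ W : Submodule ℝ H)ᗮ :=
    Submodule.sub_starProjection_mem_orthogonal x
  set v : H := (V.orthogonalProjectionOnto x' : H) with hvdef
  set w : H := (W.orthogonalProjectionOnto x' : H) with hwdef
  -- distances
  have hdU : infDist x ((V ⊓ W : Submodule ℝ H) : Set H) = ‖x'‖ := by
    rw [infDist_eq_proj]
  have hPUV : ((V ⊓ W : Submodule ℝ H).orthogonalProjectionOnto x : H) ∈ V :=
    ((V ⊓ W : Submodule ℝ H).orthogonalProjectionOnto x).2.1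
  have hPUW : ((V ⊓ W : Submodule ℝ H).orthogonalProjectionOnto x : H) ∈ W :=
    ((V ⊓ W : Submodule ℝ H).orthogonalProjectionOnto x).2.2
  have hdV : infDist x (V : Set H) = ‖x' - v‖ := by
    rw [infDist_eq_proj]
    congr 1
    rw [hvdef, hx'def, map_sub]
    push_cast
    rw [show ((V.orthogonalProjectionOnto ((V ⊓ W : Submodule ℝ H).orthogonalProjectionOnto x : H)) : H) = ((V ⊓ W : Submodule ℝ H).orthogonalProjectionOnto x : H) from Submodule.starProjection_eq_self_iff.mpr hPUV]
    abel
  have hdW : infDist x (W : Set H) = ‖x' - w‖ := by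
    rw [infDist_eq_proj]
    congr 1
    rw [hwdef, hx'def, map_sub]
    push_cast
    rw [show ((W.orthogonalProjectionOnto ((V ⊓ W : Submodule ℝ H).orthogonalProjectionOnto x : H)) : H) = ((V ⊓ W : Submodule ℝ H).orthogonalProjectionOnto x : H) from Submodule.starProjection_eq_self_iff.mpr hPUW]
    abel
  -- notation for scalars
  set n : ℝ := ‖x'‖ with hn
  set p : ℝ := ‖v‖ with hp
  set q : ℝ := ‖w‖ with hq
  set a : ℝ := ‖x' - v‖ with ha
  set b : ℝ := ‖x' - w‖ with hb
  set t : ℝ := ⟪v, w⟫ with htdef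
  -- basic inner product facts
  have hvV : v ∈ V := (V.orthogonalProjectionOnto x').2
  have hwW : w ∈ W := (W.orthogonalProjectionOnto x').2
  have hov : ∀ z ∈ V, ⟪x' - v, z⟫ = 0 := fun z hz => Submodule.starProjection_inner_eq_zero x' z hz
  have how : ∀ z ∈ W, ⟪x' - w, z⟫ = 0 := fun z hz => Submodule.starProjection_inner_eq_zero x' z hz
  have hvv : ⟪v, v⟫ = p ^ 2 := real_inner_self_eq_norm_sq v
  have hww : ⟪w, w⟫ = q ^ 2 := real_inner_self_eq_norm_sq w
  have hx'v : ⟪x', v⟫ = p ^ 2 := by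
    have h0 := hov v hvV
    rw [inner_sub_left] at h0
    linarith [hvv]
  have hx'w : ⟪x', w⟫ = q ^ 2 := by
    have h0 := how w hwW
    rw [inner_sub_left] at h0
    linarith [hww]
  have hx'x' : ⟪x', x'⟫ = n ^ 2 := real_inner_self_eq_norm_sq x'
  have hvx' : ⟪v, x'⟫ = p ^ 2 := by rw [real_inner_comm]; exact hx'v
  have hwx' : ⟪w, x'⟫ = q ^ 2 := by rw [real_inner_comm]; exact hx'w
  -- Pythagoras
  have e1 : p ^ 2 + a ^ 2 = n ^ 2 := by
    have h0 : ⟪x' - v, v⟫ = 0 := hov v hvV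
    have h1 : ‖(x' - v) + v‖ ^ 2 = ‖x' - v‖ ^ 2 + 2 * ⟪x' - v, v⟫ + ‖v‖ ^ 2 :=
      norm_add_sq_real _ _
    rw [sub_add_cancel, h0] at h1
    linarith [h1]
  have e2 : q ^ 2 + b ^ 2 = n ^ 2 := by
    have h0 : ⟪x' - w, w⟫ = 0 := how w hwW
    have h1 : ‖(x' - w) + w‖ ^ 2 = ‖x' - w‖ ^ 2 + 2 * ⟪x' - w, w⟫ + ‖w‖ ^ 2 :=
      norm_add_sq_real _ _
    rw [sub_add_cancel, h0] at h1
    linarith [h1]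
  -- v, w are in (V ⊓ W)ᗮ
  have hvU : v ∈ (V ⊓ W : Submodule ℝ H)ᗮ := by
    intro u hu
    have h1 : ⟪x' - v, u⟫ = 0 := hov u hu.1
    have h2 : ⟪u, x'⟫ = 0 := hx'U u hu
    rw [inner_sub_left] at h1
    rw [real_inner_comm] at h2
    rw [real_inner_comm]
    linarith
  have hwU : w ∈ (V ⊓ W : Submodule ℝ H)ᗮ := by
    intro u hu
    have h1 : ⟪x' - w, u⟫ = 0 := how u hu.2
    have h2 : ⟪u, x'⟫ = 0 := hx'U u hu
    rw [inner_sub_left] at h1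
    rw [real_inner_comm] at h2
    rw [real_inner_comm]
    linarith
  -- Friedrichs bound
  have ht : |t| ≤ c * p * q := by
    rcases eq_or_ne v 0 with hv0 | hv0
    · have : t = 0 := by rw [htdef, hv0, inner_zero_left]
      rw [this, hp, hv0]
      simp
    rcases eq_or_ne w 0 with hw0 | hw0
    · have : t = 0 := by rw [htdef, hw0, inner_zero_right]
      rw [this, hq, hw0]
      simp
    have hp' : 0 < p := norm_pos_iff.mpr hv0
    have hq' : 0 < q := norm_pos_iff.mpr hw0
    have hmem : |⟪(p⁻¹ • v : H), (q⁻¹ • w : H)⟫| ∈ {r : ℝ | ∃ v w : H,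
        v ∈ V ⊓ (V ⊓ W)ᗮ ∧ w ∈ W ⊓ (V ⊓ W)ᗮ ∧ ‖v‖ ≤ 1 ∧ ‖w‖ ≤ 1 ∧ r = |⟪v, w⟫|} := by
      refine ⟨p⁻¹ • v, q⁻¹ • w, ⟨Submodule.smul_mem _ _ hvV, Submodule.smul_mem _ _ hvU⟩,
        ⟨Submodule.smul_mem _ _ hwW, Submodule.smul_mem _ _ hwU⟩, ?_, ?_, rfl⟩
      · rw [norm_smul, norm_inv, Real.norm_eq_abs, abs_of_pos hp', ← hp,
          inv_mul_cancel₀ hp'.ne']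
      · rw [norm_smul, norm_inv, Real.norm_eq_abs, abs_of_pos hq', ← hq,
          inv_mul_cancel₀ hq'.ne']
    have hle : |⟪(p⁻¹ • v : H), (q⁻¹ • w : H)⟫| ≤ c := by
      rw [hc]; exact le_csSup hSbdd hmem
    rw [real_inner_smul_left, real_inner_smul_right, ← htdef, abs_mul, abs_mul,
      abs_of_pos (inv_pos.mpr hp'), abs_of_pos (inv_pos.mpr hq')] at hle
    calc |t| = p * q * (p⁻¹ * (q⁻¹ * |t|)) := by
          field_simp
      _ ≤ p * q * c := by
          apply mul_le_mul_of_nonneg_left _ (by positivity)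
          linarith [hle]
      _ = c * p * q := by ring
  -- Cauchy–Schwarz / Gram determinant
  have hdet : (n ^ 4 * t - n ^ 2 * p ^ 2 * q ^ 2) ^ 2 ≤
      (n ^ 4 * p ^ 2 - n ^ 2 * p ^ 4) * (n ^ 4 * q ^ 2 - n ^ 2 * q ^ 4) := by
    have hCS := real_inner_mul_inner_self_le
      ((n ^ 2) • v - (p ^ 2) • x') ((n ^ 2) • w - (q ^ 2) • x')
    have hAB : ⟪(n ^ 2) • v - (p ^ 2) • x', (n ^ 2) • w - (q ^ 2) • x'⟫ =
        n ^ 4 * t - n ^ 2 * p ^ 2 * q ^ 2 := by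
      simp only [inner_sub_left, inner_sub_right, real_inner_smul_left,
        real_inner_smul_right, hx'x', hvx', hx'w, hx'v, hwx', ← htdef]
      ring
    have hAA : ⟪(n ^ 2) • v - (p ^ 2) • x', (n ^ 2) • v - (p ^ 2) • x'⟫ =
        n ^ 4 * p ^ 2 - n ^ 2 * p ^ 4 := by
      simp only [inner_sub_left, inner_sub_right, real_inner_smul_left,
        real_inner_smul_right, hx'x', hvx', hx'v, hvv]
      ring
    have hBB : ⟪(n ^ 2) • w - (q ^ 2) • x', (n ^ 2) • w - (q ^ 2) • x'⟫ =
        n ^ 4 * q ^ 2 - n ^ 2 * q ^ 4 := by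
      simp only [inner_sub_left, inner_sub_right, real_inner_smul_left,
        real_inner_smul_right, hx'x', hwx', hx'w, hww]
      ring
    rw [hAB, hAA, hBB] at hCS
    rw [pow_two]
    exact hCS
  have key := key_scalar (norm_nonneg x') (norm_nonneg v) (norm_nonneg w)
    (norm_nonneg (x' - v)) (norm_nonneg (x' - w)) hc0 hc1 e1 e2 ht hdet
  -- conclude via square roots
  rw [hdU, hdV, hdW]
  have h1 : n * Real.sqrt (1 - c ^ 2) = Real.sqrt (n ^ 2 * (1 - c ^ 2)) := by
    rw [Real.sqrt_mul (sq_nonneg n), Real.sqrt_sq (norm_nonneg x')]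
  rw [h1]
  calc Real.sqrt (n ^ 2 * (1 - c ^ 2)) ≤ Real.sqrt ((a + b) ^ 2) :=
        Real.sqrt_le_sqrt key
    _ = a + b := Real.sqrt_sq (add_nonneg (norm_nonneg _) (norm_nonneg _))
end

section
/- Let H be a real Hilbert space, V_1,…,V_N closed subspaces of H, and suppose κ ≥ 2 is a constant such that d(x, V_I ∩ V_J) ≤ κ·max(d(x, V_I), d(x, V_J)) for all I, J ⊆ {1,…,N} and all x ∈ H. Let (i_n)_{n≥0} be any sequence in {1,…,N}, (λ_n)_{n≥0} any sequence in [0,2], x_0 ∈ H, and define the trajectory x_{n+1} := P_{i_n,λ_n}(x_n); set I_n := {i_k : 0 ≤ k ≤ n}. Fix n ≥ 0 and suppose that for some ε with 0 ≤ ε < κ^{−|I_n|}, one has θ_{V_{i_k}}(x_k) ≤ ε for all 0 ≤ k ≤ n. Then either x_0 = 0 or x_0 ∉ (V_{I_n})^⊥. -/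
open Metric

/-- The relative distance function `θ_V(x) = d(x,V)/‖x‖` (with `θ_V(0) = 0`). -/
noncomputable def relDist {H : Type*} [NormedAddCommGroup H] [InnerProductSpace ℝ H]
    (V : Submodule ℝ H) (x : H) : ℝ :=
  infDist x (V : Set H) / ‖x‖

open InnerProductSpace

section aux
variable {H : Type*} [NormedAddCommGroup H] [InnerProductSpace ℝ H]

lemma infDist_eq_proj_s15 (V : Submodule ℝ H) [V.HasOrthogonalProjection] (x : H) :
    infDist x (V : Set H) = ‖x - Submodule.orthogonalProjectionOnto V x‖ := by
  rw [infDist_eq_iInf, ← Submodule.starProjection_apply, Submodule.starProjection_minimal]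
  simp only [dist_eq_norm]
  rfl

lemma relDist_nonneg (V : Submodule ℝ H) (x : H) : 0 ≤ relDist V x :=
  div_nonneg infDist_nonneg (norm_nonneg x)

lemma infDist_eq_relDist_mul (V : Submodule ℝ H) (x : H) :
    infDist x (V : Set H) = relDist V x * ‖x‖ := by
  rcases eq_or_ne x 0 with h | h
  · simp [h, relDist, infDist_zero_of_mem V.zero_mem]
  · rw [relDist, div_mul_cancel₀]
    simpa using h

lemma norm_relaxProj_le (V : Submodule ℝ H) [V.HasOrthogonalProjection] {l : ℝ}
    (hl : l ∈ Set.Icc (0:ℝ) 2) (x : H) : ‖relaxProj V l x‖ ≤ ‖x‖ := by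
  set p := (Submodule.orthogonalProjectionOnto V x : H)
  have hxp : x - p ∈ Vᗮ := Submodule.sub_starProjection_mem_orthogonal x
  have hip : ⟪p, x - p⟫_ℝ = 0 := by
    exact hxp p (Submodule.orthogonalProjectionOnto V x).2
  have h1 : relaxProj V l x = p + (1 - l) • (x - p) := by
    simp [relaxProj, p, smul_sub, sub_smul]; abel
  have h2 : x = p + (x - p) := by abel
  have e1 : ‖relaxProj V l x‖^2 = ‖p‖^2 + (1-l)^2 * ‖x - p‖^2 := by
    rw [h1, norm_add_sq_real, real_inner_smul_right, hip, norm_smul, mul_pow,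
      Real.norm_eq_abs, sq_abs]
    ring
  have e2 : ‖x‖^2 = ‖p‖^2 + ‖x - p‖^2 := by
    conv_lhs => rw [h2]
    rw [norm_add_sq_real, hip]; ring
  have hl2 : (1-l)^2 ≤ 1 := by nlinarith [hl.1, hl.2]
  nlinarith [norm_nonneg (relaxProj V l x), norm_nonneg x, sq_nonneg ‖x - p‖]

end aux

section aux2
variable {H : Type*} [NormedAddCommGroup H] [InnerProductSpace ℝ H]

lemma relaxProj_sub (V : Submodule ℝ H) [V.HasOrthogonalProjection] (l : ℝ) (x y : H) :
    relaxProj V l (x - y) = relaxProj V l x - relaxProj V l y := by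
  simp only [relaxProj, map_sub, Submodule.coe_sub, smul_sub]
  abel

lemma relaxProj_mem_fixed {V : Submodule ℝ H} [V.HasOrthogonalProjection] (l : ℝ) {v : H}
    (hv : v ∈ V) : relaxProj V l v = v := by
  rw [relaxProj, ← Submodule.starProjection_apply, Submodule.starProjection_eq_self_iff.mpr hv]
  module

lemma proj_relaxProj (V J : Submodule ℝ H) [V.HasOrthogonalProjection]
    [J.HasOrthogonalProjection] (hJV : J ≤ V) (l : ℝ) (x : H) :
    (Submodule.orthogonalProjectionOnto J (relaxProj V l x) : H) = Submodule.orthogonalProjectionOnto J x := by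
  have hmem : relaxProj V l x - x ∈ Jᗮ := by
    have heq : relaxProj V l x - x = l • ((Submodule.orthogonalProjectionOnto V x : H) - x) := by
      simp only [relaxProj, smul_sub, sub_smul, one_smul]
      abel
    rw [heq]
    refine Submodule.smul_mem _ _ (Submodule.orthogonal_le hJV ?_)
    simpa using Submodule.neg_mem _ (Submodule.sub_starProjection_mem_orthogonal (K := V) x)
  have h0 : Submodule.orthogonalProjectionOnto J (relaxProj V l x - x) = 0 :=
    Submodule.orthogonalProjectionOnto_apply_of_mem_orthogonal hmem
  have : relaxProj V l x = x + (relaxProj V l x - x) := by abel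
  rw [this, map_add, h0, add_zero]

lemma pythagoras_proj (J : Submodule ℝ H) [J.HasOrthogonalProjection] (x : H) :
    ‖x‖^2 = ‖(Submodule.orthogonalProjectionOnto J x : H)‖^2 + ‖x - Submodule.orthogonalProjectionOnto J x‖^2 := by
  set q := (Submodule.orthogonalProjectionOnto J x : H)
  have hio : ⟪q, x - q⟫_ℝ = 0 :=
    (Submodule.sub_starProjection_mem_orthogonal (K := J) x) q (Submodule.orthogonalProjectionOnto J x).2
  have h2 : x = q + (x - q) := by abel
  conv_lhs => rw [h2]
  rw [norm_add_sq_real, hio]; ring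

lemma relDist_relaxProj_le (V J : Submodule ℝ H) [V.HasOrthogonalProjection]
    [J.HasOrthogonalProjection] (hJV : J ≤ V) {l : ℝ} (hl : l ∈ Set.Icc (0:ℝ) 2) (x : H) :
    relDist J (relaxProj V l x) ≤ relDist J x := by
  set x' := relaxProj V l x with hx'
  set q := (Submodule.orthogonalProjectionOnto J x : H) with hq
  have hqmem : q ∈ J := (Submodule.orthogonalProjectionOnto J x).2
  have hq' : (Submodule.orthogonalProjectionOnto J x' : H) = q := proj_relaxProj V J hJV l x
  have d2eq : infDist x' (J : Set H) = ‖x' - q‖ := by rw [infDist_eq_proj_s15, hq']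
  have d1eq : infDist x (J : Set H) = ‖x - q‖ := infDist_eq_proj_s15 J x
  have hle : ‖x' - q‖ ≤ ‖x - q‖ := by
    have heq : x' - q = relaxProj V l (x - q) := by
      rw [relaxProj_sub, relaxProj_mem_fixed l (hJV hqmem)]
    rw [heq]; exact norm_relaxProj_le V hl _
  have p1 : ‖x‖^2 = ‖q‖^2 + ‖x - q‖^2 := pythagoras_proj J x
  have p2 : ‖x'‖^2 = ‖q‖^2 + ‖x' - q‖^2 := by
    have := pythagoras_proj J x'
    rwa [hq'] at this
  rw [relDist, relDist, d1eq, d2eq]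
  by_cases hx0 : ‖x'‖ = 0
  · rw [hx0, div_zero]
    positivity
  · have hx'pos : 0 < ‖x'‖ := lt_of_le_of_ne (norm_nonneg _) (Ne.symm hx0)
    have hsq : ‖x' - q‖^2 ≤ ‖x - q‖^2 := pow_le_pow_left₀ (norm_nonneg _) hle 2
    have hxpos : 0 < ‖x‖ := by nlinarith [norm_nonneg x]
    rw [div_le_div_iff₀ hx'pos hxpos]
    nlinarith [norm_nonneg (x' - q), norm_nonneg (x - q), sq_nonneg ‖q‖,
      mul_nonneg (norm_nonneg (x - q)) (norm_nonneg x'),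
      mul_nonneg (norm_nonneg (x' - q)) (norm_nonneg x)]

lemma completeSpace_biInf [CompleteSpace H] {N : ℕ} (V : Fin N → Submodule ℝ H)
    [∀ i, CompleteSpace (V i)] (S : Finset (Fin N)) :
    CompleteSpace (⨅ i ∈ S, V i : Submodule ℝ H) := by
  suffices h : IsClosed ((⨅ i ∈ S, V i : Submodule ℝ H) : Set H) by
    exact h.completeSpace_coe
  induction S using Finset.induction_on with
  | empty => simp
  | @insert a s ha ih =>
    rw [Finset.iInf_insert, Submodule.coe_inf]
    have hc : IsComplete ((V a : Submodule ℝ H) : Set H) :=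
      completeSpace_coe_iff_isComplete.mp inferInstance
    exact IsClosed.inter hc.isClosed ih

end aux2

/-- if all relative distances along the trajectory up to time `n` are at most
`ε < κ^{−|I_n|}`, then either `x_0 = 0` or `x_0 ∉ (V_{I_n})^⊥`. -/
theorem stmt_15 {H : Type*} [NormedAddCommGroup H] [InnerProductSpace ℝ H] [CompleteSpace H]
    (N : ℕ) (hN : 1 ≤ N) (V : Fin N → Submodule ℝ H) [∀ i, CompleteSpace (V i)]
    (κ : ℝ) (hκ : 2 ≤ κ)
    (hreg : ∀ (I J : Finset (Fin N)) (x : H),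
      infDist x ((((⨅ i ∈ I, V i) ⊓ ⨅ j ∈ J, V j) : Submodule ℝ H) : Set H) ≤
        κ * max (infDist x ((⨅ i ∈ I, V i : Submodule ℝ H) : Set H))
                (infDist x ((⨅ j ∈ J, V j : Submodule ℝ H) : Set H)))
    (i : ℕ → Fin N) (lam : ℕ → ℝ) (hlam : ∀ n, lam n ∈ Set.Icc (0 : ℝ) 2)
    (x : ℕ → H) (hx : ∀ n, x (n + 1) = relaxProj (V (i n)) (lam n) (x n))
    (n : ℕ) (ε : ℝ) (hε0 : 0 ≤ ε)
    (hεκ : ε < (κ ^ ((Finset.range (n + 1)).image i).card)⁻¹)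
    (hsmall : ∀ k, k ≤ n → relDist (V (i k)) (x k) ≤ ε) :
    x 0 = 0 ∨ x 0 ∉ ((⨅ j ∈ (Finset.range (n + 1)).image i, V j : Submodule ℝ H))ᗮ := by
  by_cases hx00 : x 0 = 0
  · exact Or.inl hx00
  right
  intro hW
  have hκpos : (0:ℝ) < κ := lt_of_lt_of_le two_pos hκ
  -- basic notation
  set VS : Submodule ℝ H := ⨅ j ∈ (Finset.range (n + 1)).image i, V j with hVS
  haveI : CompleteSpace VS := completeSpace_biInf V _
  set m : ℕ := ((Finset.range (n + 1)).image i).card with hm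
  have hm1 : 1 ≤ m :=
    Finset.card_pos.mpr ⟨i 0, Finset.mem_image_of_mem i (Finset.mem_range.mpr (Nat.succ_pos n))⟩
  have hκm2 : (2:ℝ) ≤ κ ^ m := le_trans hκ (le_self_pow₀ (by linarith) (by omega))
  have hεhalf : ε < 1/2 := by
    refine lt_of_lt_of_le hεκ ?_
    rw [show (1:ℝ)/2 = 2⁻¹ by norm_num]
    exact inv_anti₀ two_pos hκm2
  have hVSle : ∀ k, k ≤ n → VS ≤ V (i k) := by
    intro k hk
    exact iInf₂_le (i k) (Finset.mem_image_of_mem i (Finset.mem_range.mpr (by omega)))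
  -- all iterates up to n are nonzero and stay in VSᗮ
  have key : ∀ k, k ≤ n → x k ∈ VSᗮ ∧ x k ≠ 0 := by
    intro k
    induction k with
    | zero => exact fun _ => ⟨hW, hx00⟩
    | succ k ih =>
      intro hk1
      have hkn : k ≤ n := by omega
      obtain ⟨hmem, hne⟩ := ih hkn
      have hnorm_pos : 0 < ‖x k‖ := norm_pos_iff.mpr hne
      have hinf : infDist (x k) ((V (i k) : Set H)) ≤ ε * ‖x k‖ := by
        rw [infDist_eq_relDist_mul]
        exact mul_le_mul_of_nonneg_right (hsmall k hkn) (norm_nonneg _)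
      constructor
      · -- membership
        rw [hx k, relaxProj]
        refine VSᗮ.add_mem (VSᗮ.smul_mem _ hmem) (VSᗮ.smul_mem _ ?_)
        rw [Submodule.mem_orthogonal]
        intro v hv
        have hvV : v ∈ V (i k) := hVSle k hkn hv
        have h2 := Submodule.inner_starProjection_left_eq_right (V (i k)) v (x k)
        rw [Submodule.starProjection_eq_self_iff.mpr hvV, Submodule.starProjection_apply] at h2
        rw [← h2]
        exact (Submodule.mem_orthogonal VS (x k)).mp hmem v hv
      · -- nonvanishing
        have hrw : x (k+1) = x k - lam k • (x k - (Submodule.orthogonalProjectionOnto (V (i k)) (x k) : H)) := by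
          rw [hx k, relaxProj]; module
        have hu : ‖x k - (Submodule.orthogonalProjectionOnto (V (i k)) (x k) : H)‖ ≤ ε * ‖x k‖ := by
          rw [← infDist_eq_proj_s15]; exact hinf
        have hlow : (1 - 2*ε) * ‖x k‖ ≤ ‖x (k+1)‖ := by
          rw [hrw]
          have h3 : ‖x k‖ - ‖lam k • (x k - (Submodule.orthogonalProjectionOnto (V (i k)) (x k) : H))‖ ≤
              ‖x k - lam k • (x k - (Submodule.orthogonalProjectionOnto (V (i k)) (x k) : H))‖ :=
            norm_sub_norm_le _ _
          have h4 : ‖lam k • (x k - (Submodule.orthogonalProjectionOnto (V (i k)) (x k) : H))‖ ≤ 2 * (ε * ‖x k‖) := by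
            rw [norm_smul, Real.norm_eq_abs, abs_of_nonneg (hlam k).1]
            exact mul_le_mul (hlam k).2 hu (norm_nonneg _) (by norm_num)
          nlinarith
        have : 0 < ‖x (k+1)‖ := by nlinarith
        exact norm_pos_iff.mp this
  -- main induction: relative distance to the span of indices seen so far
  have main : ∀ k, k ≤ n →
      relDist (⨅ j ∈ (Finset.range (k + 1)).image i, V j : Submodule ℝ H) (x k) ≤
        κ ^ (((Finset.range (k + 1)).image i).card - 1) * ε := by
    intro k
    induction k with
    | zero =>
      intro _
      have hS0 : (Finset.range 1).image i = {i 0} := by simp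
      rw [hS0]
      simpa using hsmall 0 (Nat.zero_le n)
    | succ k ih =>
      intro hk1
      have hkn : k ≤ n := by omega
      have ihk := ih hkn
      haveI : CompleteSpace (⨅ j ∈ (Finset.range (k + 1)).image i, V j : Submodule ℝ H) :=
        completeSpace_biInf V _
      have hikmem : i k ∈ (Finset.range (k + 1)).image i :=
        Finset.mem_image_of_mem i (Finset.mem_range.mpr (by omega))
      have hmono : relDist (⨅ j ∈ (Finset.range (k + 1)).image i, V j : Submodule ℝ H) (x (k+1)) ≤
          κ ^ (((Finset.range (k + 1)).image i).card - 1) * ε := by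
        rw [hx k]
        exact le_trans (relDist_relaxProj_le (V (i k)) _ (iInf₂_le (i k) hikmem)
          (hlam k) (x k)) ihk
      have hstep : (Finset.range (k + 2)).image i =
          insert (i (k+1)) ((Finset.range (k + 1)).image i) := by
        rw [Finset.range_add_one, Finset.image_insert]
      by_cases hnew : i (k+1) ∈ (Finset.range (k + 1)).image i
      · have hS : (Finset.range (k + 2)).image i = (Finset.range (k + 1)).image i := by
          rw [hstep, Finset.insert_eq_self.mpr hnew]
        rw [hS]
        exact hmono
      · -- a new subspace appears
        have hcard1 : 1 ≤ ((Finset.range (k + 1)).image i).card :=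
          Finset.card_pos.mpr ⟨i k, hikmem⟩
        have hcard : ((Finset.range (k + 2)).image i).card =
            ((Finset.range (k + 1)).image i).card + 1 := by
          rw [hstep, Finset.card_insert_of_notMem hnew]
        haveI : CompleteSpace (⨅ j ∈ (Finset.range (k + 2)).image i, V j : Submodule ℝ H) :=
          completeSpace_biInf V _
        set c : ℝ := κ ^ (((Finset.range (k + 1)).image i).card - 1) * ε with hc
        have hc0 : 0 ≤ c := mul_nonneg (le_of_lt (pow_pos hκpos _)) hε0
        have hεc : ε ≤ c := by
          rw [hc]
          nlinarith [one_le_pow₀ (le_trans one_le_two hκ)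
            (n := ((Finset.range (k + 1)).image i).card - 1)]
        have hr := hreg ((Finset.range (k + 1)).image i) {i (k+1)} (x (k+1))
        have e1 : (⨅ j ∈ ({i (k+1)} : Finset (Fin N)), V j) = V (i (k+1)) := by simp
        have e2 : ((⨅ j ∈ (Finset.range (k + 1)).image i, V j) ⊓
            ⨅ j ∈ ({i (k+1)} : Finset (Fin N)), V j) =
            ⨅ j ∈ (Finset.range (k + 2)).image i, V j := by
          rw [e1, hstep, Finset.iInf_insert, inf_comm]
        rw [e2, e1] at hr
        -- bound the two distances
        have hd1 : infDist (x (k+1)) ((⨅ j ∈ (Finset.range (k + 1)).image i, V j :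
            Submodule ℝ H) : Set H) ≤ c * ‖x (k+1)‖ := by
          rw [infDist_eq_relDist_mul]
          exact mul_le_mul_of_nonneg_right hmono (norm_nonneg _)
        have hd2 : infDist (x (k+1)) ((V (i (k+1)) : Set H)) ≤ c * ‖x (k+1)‖ := by
          rw [infDist_eq_relDist_mul]
          exact mul_le_mul_of_nonneg_right (le_trans (hsmall (k+1) hk1) hεc) (norm_nonneg _)
        have hmax : infDist (x (k+1)) ((⨅ j ∈ (Finset.range (k + 2)).image i, V j :
            Submodule ℝ H) : Set H) ≤ κ * c * ‖x (k+1)‖ := by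
          calc infDist (x (k+1)) ((⨅ j ∈ (Finset.range (k + 2)).image i, V j :
              Submodule ℝ H) : Set H) ≤ κ * max _ _ := hr
          _ ≤ κ * (c * ‖x (k+1)‖) := by
              exact mul_le_mul_of_nonneg_left (max_le hd1 hd2) (le_of_lt hκpos)
          _ = κ * c * ‖x (k+1)‖ := by ring
        have hpow : κ * c = κ ^ (((Finset.range (k + 2)).image i).card - 1) * ε := by
          rw [hc, hcard]
          rw [show ((Finset.range (k + 1)).image i).card + 1 - 1 =
            (((Finset.range (k + 1)).image i).card - 1) + 1 by omega]
          rw [pow_succ]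
          ring
        rw [relDist, ← hpow]
        by_cases hz : ‖x (k+1)‖ = 0
        · rw [hz, div_zero]
          exact mul_nonneg (le_of_lt hκpos) hc0
        · have hzp : 0 < ‖x (k+1)‖ := lt_of_le_of_ne (norm_nonneg _) (Ne.symm hz)
          rw [div_le_iff₀ hzp]
          exact hmax
  -- conclusion
  obtain ⟨hmemn, hnen⟩ := key n le_rfl
  have hfin := main n le_rfl
  have hproj0 : Submodule.orthogonalProjectionOnto VS (x n) = 0 :=
    Submodule.orthogonalProjectionOnto_apply_of_mem_orthogonal hmemn
  have hinfn : infDist (x n) (VS : Set H) = ‖x n‖ := by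
    rw [infDist_eq_proj_s15, hproj0]
    simp
  have hrel1 : relDist VS (x n) = 1 := by
    rw [relDist, hinfn, div_self (norm_pos_iff.mpr hnen).ne']
  rw [hrel1] at hfin
  -- 1 ≤ κ^(m-1) * ε < κ^(m-1) * κ^{-m} = κ⁻¹ ≤ 1/2
  have h2 : κ ^ (m - 1) * ε < κ ^ (m - 1) * (κ ^ m)⁻¹ :=
    mul_lt_mul_of_pos_left hεκ (pow_pos hκpos _)
  have h3 : κ ^ (m - 1) * (κ ^ m)⁻¹ = κ⁻¹ := by
    rw [show m = (m - 1) + 1 by omega, pow_succ]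
    field_simp
    simp
  have h4 : κ⁻¹ ≤ 1/2 := by
    rw [show (1:ℝ)/2 = 2⁻¹ by norm_num]
    exact inv_anti₀ two_pos hκ
  rw [h3] at h2
  linarith
end
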